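/- Let p be an odd prime and G a finite group with g^p = 1 for all g ∈ G and [G,G] = Z(G), 1 < Z(G) < G, and set b = Bi(G). The map sending an automorphism φ of G to the pair consisting of the induced map on G/Z(G) and the induced map on [G,G] is a group homomorphism from Aut(G) onto the pseudo-isometry group ΨIsom(b) = {(f, f̂) ∈ GL(G/Z(G)) × GL([G,G]) : b(uf, vf) = b(u,v)f̂ for all u,v}; this homomorphism is surjective, its kernel consists exactly of the automorphisms inducing the identity on both G/Z(G) and [G,G], the kernel is isomorphic to the additive group Hom_{𝔽_p}(G/Z(G), [G,G]), and the resulting extension splits (so Aut(G) ≅ ΨIsom(b) ⋉ Hom_{𝔽_p}(G/Z(G), [G,G])). -/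

import Mathlib

open scoped commutatorElement IsMulCommutative

namespace AutClassTwoAux

variable {G : Type} [Group G]

theorem comm_mem_center (hcz : commutator G = Subgroup.center G) (a b : G) :
    ⁅a, b⁆ ∈ Subgroup.center G := by
  rw [← hcz, commutator_def]
  exact Subgroup.commutator_mem_commutator (Subgroup.mem_top a) (Subgroup.mem_top b)

theorem central_comm {z : G} (hz : z ∈ Subgroup.center G) (g : G) : g * z = z * g :=
  Subgroup.mem_center_iff.mp hz g

theorem comm_mul_left (hcz : commutator G = Subgroup.center G) (a b c : G) :
    ⁅a * b, c⁆ = ⁅a, c⁆ * ⁅b, c⁆ := by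
  have h1 : ⁅a * b, c⁆ = a * ⁅b, c⁆ * a⁻¹ * ⁅a, c⁆ := by group
  have h2 : a * ⁅b, c⁆ = ⁅b, c⁆ * a := central_comm (comm_mem_center hcz b c) a
  rw [h1, h2, mul_assoc, mul_assoc, mul_inv_cancel_left]
  exact central_comm (comm_mem_center hcz a c) _

theorem comm_mul_right (hcz : commutator G = Subgroup.center G) (a b c : G) :
    ⁅a, b * c⁆ = ⁅a, b⁆ * ⁅a, c⁆ := by
  have h1 : ⁅a, b * c⁆ = ⁅a, b⁆ * (b * ⁅a, c⁆ * b⁻¹) := by group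
  rw [h1, central_comm (comm_mem_center hcz a c) b]
  simp [mul_assoc]

theorem comm_pow_left (hcz : commutator G = Subgroup.center G) (a b : G) (n : ℕ) :
    ⁅a ^ n, b⁆ = ⁅a, b⁆ ^ n := by
  induction n with
  | zero => simp [commutatorElement_def]
  | succ n ih => rw [pow_succ, comm_mul_left hcz, ih, pow_succ]

theorem comm_pow_eq_one (hcz : commutator G = Subgroup.center G)
    {p : ℕ} (hexp : ∀ g : G, g ^ p = 1) (a b : G) : ⁅a, b⁆ ^ p = 1 := by
  rw [← comm_pow_left hcz, hexp a]
  simp [commutatorElement_def]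

theorem comm_central_right (hcz : commutator G = Subgroup.center G) (a : G) {z : G}
    (hz : z ∈ Subgroup.center G) : ⁅a, z⁆ = 1 := by
  have h := central_comm hz a⁻¹
  rw [commutatorElement_def, show a * z * a⁻¹ * z⁻¹ = a * (z * a⁻¹) * z⁻¹ by group, ← h]
  group

theorem comm_central_left (hcz : commutator G = Subgroup.center G) (a : G) {z : G}
    (hz : z ∈ Subgroup.center G) : ⁅z, a⁆ = 1 := by
  rw [← commutatorElement_inv, comm_central_right hcz a hz, inv_one]

theorem comm_mul_central_right (hcz : commutator G = Subgroup.center G) (c d : G) {z : G}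
    (hz : z ∈ Subgroup.center G) : ⁅c, d * z⁆ = ⁅c, d⁆ := by
  rw [comm_mul_right hcz, comm_central_right hcz c hz, mul_one]

theorem comm_mul_central_left (hcz : commutator G = Subgroup.center G) (c d : G) {z : G}
    (hz : z ∈ Subgroup.center G) : ⁅d * z, c⁆ = ⁅d, c⁆ := by
  rw [comm_mul_left hcz, comm_central_left hcz c hz, mul_one]

theorem comm_coset (hcz : commutator G = Subgroup.center G) (a b : G) {z w : G}
    (hz : z ∈ Subgroup.center G) (hw : w ∈ Subgroup.center G) :
    ⁅a * z, b * w⁆ = ⁅a, b⁆ := by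
  rw [comm_mul_central_left hcz _ _ hz, comm_mul_central_right hcz _ _ hw]

theorem mul_comm_comm (hcz : commutator G = Subgroup.center G) (a b : G) :
    b * a * ⁅a, b⁆ = a * b := by
  rw [central_comm (comm_mem_center hcz a b) (b * a)]
  group

/-- The Baer addition `a + b = a * b * ⁅b,a⁆^((p+1)/2)` makes `G` an abelian group. -/
def addG (p : ℕ) (hp : Odd p) (hexp : ∀ g : G, g ^ p = 1)
    (hcz : commutator G = Subgroup.center G) : AddCommGroup G :=
  letI : Zero G := ⟨(1 : G)⟩
  letI : Add G := ⟨fun a b => a * b * ⁅b, a⁆ ^ ((p + 1) / 2)⟩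
  letI : Neg G := ⟨fun a => a⁻¹⟩
  { add := (· + ·)
    zero := 0
    neg := Neg.neg
    nsmul := nsmulRec
    zsmul := zsmulRec
    add_assoc := fun a b c => by
      set k := (p + 1) / 2 with hk
      have hK1 : ⁅b, a⁆ ^ k ∈ Subgroup.center G := pow_mem (comm_mem_center hcz b a) k
      have hK3 : ⁅c, b⁆ ^ k ∈ Subgroup.center G := pow_mem (comm_mem_center hcz c b) k
      show a * b * ⁅b, a⁆ ^ k * c * ⁅c, a * b * ⁅b, a⁆ ^ k⁆ ^ k
          = a * (b * c * ⁅c, b⁆ ^ k) * ⁅b * c * ⁅c, b⁆ ^ k, a⁆ ^ k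
      rw [show a * b * ⁅b, a⁆ ^ k = (a * b) * ⁅b, a⁆ ^ k from rfl,
        comm_mul_central_right hcz c _ hK1,
        show b * c * ⁅c, b⁆ ^ k = (b * c) * ⁅c, b⁆ ^ k from rfl,
        comm_mul_central_left hcz a _ hK3,
        comm_mul_right hcz c a b, comm_mul_left hcz b c a]
      have hcom1 : Commute ⁅c, a⁆ ⁅c, b⁆ := central_comm (comm_mem_center hcz c b) _
      have hcom2 : Commute ⁅b, a⁆ ⁅c, a⁆ := central_comm (comm_mem_center hcz c a) _
      rw [hcom1.mul_pow, hcom2.mul_pow]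
      have e1 : a * b * ⁅b, a⁆ ^ k * c = a * b * c * ⁅b, a⁆ ^ k := by
        rw [mul_assoc (a * b), ← central_comm hK1 c, ← mul_assoc]
      have e2 : a * (b * c * ⁅c, b⁆ ^ k) = a * b * c * ⁅c, b⁆ ^ k := by
        rw [← mul_assoc, ← mul_assoc]
      rw [e1, e2, mul_assoc (a * b * c), mul_assoc (a * b * c)]
      congr 1
      rw [← mul_assoc]
      exact central_comm hK3 _
    zero_add := fun a => by
      show (1 : G) * a * ⁅a, (1 : G)⁆ ^ ((p + 1) / 2) = a
      simp [commutatorElement_def]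
    add_zero := fun a => by
      show a * 1 * ⁅(1 : G), a⁆ ^ ((p + 1) / 2) = a
      simp [commutatorElement_def]
    neg_add_cancel := fun a => by
      show a⁻¹ * a * ⁅a, a⁻¹⁆ ^ ((p + 1) / 2) = 1
      have h1 : ⁅a, a⁻¹⁆ = 1 := commutatorElement_eq_one_iff_commute.mpr ((Commute.refl a).inv_right)
      simp [h1]
    add_comm := fun a b => by
      set k := (p + 1) / 2 with hk
      have h2 : k + k = p + 1 := by obtain ⟨m, hm⟩ := hp; omega
      show a * b * ⁅b, a⁆ ^ k = b * a * ⁅a, b⁆ ^ k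
      have e1 : ⁅b, a⁆ ^ k = (⁅a, b⁆ ^ k)⁻¹ := by rw [← commutatorElement_inv, inv_pow]
      rw [e1, ← mul_comm_comm hcz a b, mul_inv_eq_iff_eq_mul]
      conv_rhs => rw [mul_assoc, ← pow_add, h2, pow_succ, comm_pow_eq_one hcz hexp, one_mul] }


def zmodModuleOfPrime {M : Type} [AddCommGroup M] (p : ℕ) [Fact p.Prime]
    (h : ∀ x : M, p • x = 0) : Module (ZMod p) M :=
  haveI : NeZero p := ⟨(Fact.out : p.Prime).ne_zero⟩
  haveI : Fact (1 < p) := ⟨(Fact.out : p.Prime).one_lt⟩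
  have key : ∀ (n m : ℕ), n % p = m % p → ∀ x : M, n • x = m • x := by
    have h0 : ∀ (n : ℕ) (x : M), n • x = (n % p) • x := by
      intro n x
      conv_lhs => rw [← Nat.div_add_mod n p]
      rw [add_nsmul, mul_nsmul, h, smul_zero, zero_add]
    intro n m hnm x
    rw [h0 n, h0 m, hnm]
  { smul := fun c x => c.val • x
    one_smul := fun x => by
      show (1 : ZMod p).val • x = x
      rw [ZMod.val_one, one_nsmul]
    mul_smul := fun a b x => by
      show (a * b).val • x = a.val • (b.val • x)
      rw [← mul_nsmul]
      exact key _ _ (by rw [ZMod.val_mul, Nat.mod_mod_of_dvd _ dvd_rfl, mul_comm]) x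
    smul_zero := fun c => by
      show c.val • (0 : M) = 0
      exact smul_zero _
    smul_add := fun c x y => by
      show c.val • (x + y) = c.val • x + c.val • y
      exact nsmul_add x y _
    add_smul := fun a b x => by
      show (a + b).val • x = a.val • x + b.val • x
      rw [← add_nsmul]
      exact key _ _ (by rw [ZMod.val_add]; simp [Nat.mod_mod_of_dvd]) x
    zero_smul := fun x => by
      show (0 : ZMod p).val • x = 0
      rw [ZMod.val_zero, zero_nsmul] }


theorem quot_mul_comm (hcz : commutator G = Subgroup.center G)
    (x y : G ⧸ Subgroup.center G) : x * y = y * x := by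
  induction x using QuotientGroup.induction_on with | H a =>
  induction y using QuotientGroup.induction_on with | H b =>
  rw [← QuotientGroup.mk_mul, ← QuotientGroup.mk_mul, ← mul_comm_comm hcz a b,
    QuotientGroup.mk_mul, (QuotientGroup.eq_one_iff _).mpr (comm_mem_center hcz a b), mul_one]

/-- The quotient `G ⧸ Z(G)` as an abelian additive group. -/
def quotAdd (hcz : commutator G = Subgroup.center G) :
    AddCommGroup (G ⧸ Subgroup.center G) :=
  letI : Zero (G ⧸ Subgroup.center G) := ⟨1⟩
  letI : Add (G ⧸ Subgroup.center G) := ⟨fun a b => a * b⟩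
  letI : Neg (G ⧸ Subgroup.center G) := ⟨fun a => a⁻¹⟩
  { add := (· + ·)
    zero := 0
    neg := Neg.neg
    nsmul := nsmulRec
    zsmul := zsmulRec
    add_assoc := fun a b c => mul_assoc a b c
    zero_add := fun a => one_mul a
    add_zero := fun a => mul_one a
    neg_add_cancel := fun a => inv_mul_cancel a
    add_comm := fun a b => quot_mul_comm hcz a b }

theorem exists_section (p : ℕ) [Fact p.Prime] (hp : Odd p) (hexp : ∀ g : G, g ^ p = 1)
    (hcz : commutator G = Subgroup.center G) :
    ∃ s : G ⧸ Subgroup.center G → G,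
      (∀ u, (QuotientGroup.mk (s u) : G ⧸ Subgroup.center G) = u) ∧
      (∀ u v, s (u * v) = s u * s v * ⁅s v, s u⁆ ^ ((p + 1) / 2)) := by
  letI A : AddCommGroup G := addG p hp hexp hcz
  letI AQ : AddCommGroup (G ⧸ Subgroup.center G) := quotAdd hcz
  have hnsmul : ∀ (n : ℕ) (a : G), n • a = a ^ n := by
    intro n a
    induction n with
    | zero => rw [zero_nsmul, pow_zero]; exact rfl
    | succ n ih =>
      rw [succ_nsmul, ih]
      show a ^ n * a * ⁅a, a ^ n⁆ ^ ((p + 1) / 2) = a ^ (n + 1)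
      rw [commutatorElement_eq_one_iff_commute.mpr ((Commute.refl a).pow_right n),
        one_pow, mul_one, pow_succ]
  have hnsmulQ : ∀ (n : ℕ) (x : G ⧸ Subgroup.center G), n • x = x ^ n := by
    intro n x
    induction n with
    | zero => rw [zero_nsmul, pow_zero]; exact rfl
    | succ n ih =>
      rw [succ_nsmul, ih]
      show x ^ n * x = x ^ (n + 1)
      rw [pow_succ]
  letI : Module (ZMod p) G := zmodModuleOfPrime p (fun x => by rw [hnsmul]; exact hexp x)
  letI : Module (ZMod p) (G ⧸ Subgroup.center G) := zmodModuleOfPrime p (fun x => by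
    rw [hnsmulQ]
    induction x using QuotientGroup.induction_on with | H a =>
    rw [← QuotientGroup.mk_pow, hexp a]
    exact rfl)
  let pr : G →+ (G ⧸ Subgroup.center G) := AddMonoidHom.mk' QuotientGroup.mk (fun a b => by
    show (QuotientGroup.mk (a * b * ⁅b, a⁆ ^ ((p + 1) / 2)) : G ⧸ Subgroup.center G)
      = QuotientGroup.mk a * QuotientGroup.mk b
    rw [QuotientGroup.mk_mul, QuotientGroup.mk_mul,
      (QuotientGroup.eq_one_iff _).mpr (pow_mem (comm_mem_center hcz b a) _), mul_one])
  let lpr := pr.toZModLinearMap p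
  have hsurj : LinearMap.range lpr = ⊤ := by
    apply Submodule.eq_top_iff'.mpr
    intro q
    exact QuotientGroup.induction_on q fun a => LinearMap.mem_range.mpr ⟨a, rfl⟩
  obtain ⟨σ, hσ⟩ := lpr.exists_rightInverse_of_surjective hsurj
  refine ⟨fun u => σ u, fun u => ?_, fun u v => ?_⟩
  · exact LinearMap.ext_iff.mp hσ u
  · show σ (u * v) = σ u * σ v * ⁅σ v, σ u⁆ ^ ((p + 1) / 2)
    have huv : u * v = u + v := rfl
    rw [huv, map_add]
    rfl

theorem assemble (hcz : commutator G = Subgroup.center G) (A B c1 c2 : G)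
    (hc1 : c1 ∈ Subgroup.center G) (k : ℕ) :
    A * B * ⁅B, A⁆ ^ k * (⁅B, A⁆⁻¹ ^ k * (c1 * c2)) = A * c1 * (B * c2) := by
  rw [inv_pow, mul_assoc (A * B) (⁅B, A⁆ ^ k), ← mul_assoc (⁅B, A⁆ ^ k) (⁅B, A⁆ ^ k)⁻¹,
    mul_inv_cancel, one_mul, mul_assoc A c1 (B * c2), ← mul_assoc c1 B c2,
    ← central_comm hc1 B, mul_assoc B c1 c2, ← mul_assoc A B (c1 * c2)]

end AutClassTwoAux

open AutClassTwoAux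

/-- Let `p` be an odd prime and `G` a finite group with `g^p = 1` for all
`g`, `[G,G] = Z(G)` and `1 < Z(G) < G`.  The map sending an automorphism of `G` to the pair
of maps it induces on `G/Z(G)` and on `Z(G) = [G,G]` is a group homomorphism `π` whose range
is exactly the group `ΨIsom(Bi(G))` of pseudo-isometries of the commutator bimap, whose kernel
consists exactly of the automorphisms inducing the identity on `G/Z(G)` and on `[G,G]`, that
kernel being isomorphic to `Hom(G/Z(G), [G,G])`; moreover the extension splits. -/
theorem aut_of_class_two_structure
    (p : ℕ) [Fact p.Prime] (hp : Odd p) (G : Type) [Group G] [Finite G]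
    (hexp : ∀ g : G, g ^ p = 1)
    (hcz : commutator G = Subgroup.center G)
    (hbot : ⊥ < Subgroup.center G) (htop : Subgroup.center G < ⊤) :
    ∃ π : MulAut G →* MulAut (G ⧸ Subgroup.center G) × MulAut ↥(Subgroup.center G),
      (∀ (φ : MulAut G) (g : G),
        (π φ).1 ↑g = ((φ g : G) : G ⧸ Subgroup.center G)) ∧
      (∀ (φ : MulAut G) (c : ↥(Subgroup.center G)), ((π φ).2 c : G) = φ ↑c) ∧
      (∀ x : MulAut (G ⧸ Subgroup.center G) × MulAut ↥(Subgroup.center G),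
        x ∈ π.range ↔
          ∀ g h g' h' : G,
            x.1 ↑g = (↑g' : G ⧸ Subgroup.center G) →
            x.1 ↑h = (↑h' : G ⧸ Subgroup.center G) →
            x.2 ⟨⁅g, h⁆, by
                rw [← hcz, commutator_def]
                exact Subgroup.commutator_mem_commutator (Subgroup.mem_top g)
                  (Subgroup.mem_top h)⟩ =
              ⟨⁅g', h'⁆, by
                rw [← hcz, commutator_def]
                exact Subgroup.commutator_mem_commutator (Subgroup.mem_top g')
                  (Subgroup.mem_top h')⟩) ∧
      (∀ φ : MulAut G, φ ∈ π.ker ↔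
        ((∀ g : G, ((φ g : G) : G ⧸ Subgroup.center G) = ↑g) ∧
          (∀ c : G, c ∈ commutator G → φ c = c))) ∧
      Nonempty (↥π.ker ≃* ((G ⧸ Subgroup.center G) →* ↥(Subgroup.center G))) ∧
      (∃ s : ↥π.range →* MulAut G, ∀ y : ↥π.range, π (s y) = ↑y) := by
  classical
  obtain ⟨s, hs_mk, hs_add⟩ := AutClassTwoAux.exists_section p hp hexp hcz
  set k : ℕ := (p + 1) / 2 with hk
  -- the homomorphism π
  have hmapZ : ∀ φ : MulAut G,
      (Subgroup.center G).map (φ : G ≃* G).toMonoidHom = Subgroup.center G :=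
    fun φ => (Subgroup.characteristic_iff_map_eq.mp inferInstance) φ
  let q1 : MulAut G → MulAut (G ⧸ Subgroup.center G) := fun φ =>
    QuotientGroup.congr (Subgroup.center G) (Subgroup.center G) (φ : G ≃* G) (hmapZ φ)
  let q2 : MulAut G → MulAut ↥(Subgroup.center G) := fun φ =>
    ((φ : G ≃* G).subgroupMap (Subgroup.center G)).trans (MulEquiv.subgroupCongr (hmapZ φ))
  have hq1 : ∀ (φ : MulAut G) (g : G),
      q1 φ ↑g = ((φ g : G) : G ⧸ Subgroup.center G) := fun φ g => rfl
  have hq2 : ∀ (φ : MulAut G) (c : ↥(Subgroup.center G)), (q2 φ c : G) = φ ↑c :=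
    fun φ c => rfl
  let π : MulAut G →* MulAut (G ⧸ Subgroup.center G) × MulAut ↥(Subgroup.center G) :=
    MonoidHom.mk' (fun φ => (q1 φ, q2 φ)) (by
      intro φ ψ
      refine Prod.ext ?_ ?_
      · refine MulEquiv.ext fun q => ?_
        induction q using QuotientGroup.induction_on with | H g =>
        show q1 (φ * ψ) ↑g = (q1 φ * q1 ψ) ↑g
        rw [MulAut.mul_apply, hq1, hq1, hq1]
        rfl
      · refine MulEquiv.ext fun c => ?_
        show q2 (φ * ψ) c = (q2 φ * q2 ψ) c
        refine Subtype.ext ?_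
        rw [MulAut.mul_apply, hq2, hq2, hq2]
        rfl)
  have hπ1 : ∀ (φ : MulAut G) (g : G),
      (π φ).1 ↑g = ((φ g : G) : G ⧸ Subgroup.center G) := fun φ g => hq1 φ g
  have hπ2 : ∀ (φ : MulAut G) (c : ↥(Subgroup.center G)), ((π φ).2 c : G) = φ ↑c :=
    fun φ c => hq2 φ c
  -- section infrastructure
  have hmks : ∀ (u : G ⧸ Subgroup.center G) (z : G), z ∈ Subgroup.center G →
      (QuotientGroup.mk (s u * z) : G ⧸ Subgroup.center G) = u := by
    intro u z hz
    rw [QuotientGroup.mk_mul, hs_mk, (QuotientGroup.eq_one_iff z).mpr hz, mul_one]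
  have hmem : ∀ g : G, (s ↑g)⁻¹ * g ∈ Subgroup.center G := by
    intro g
    refine (QuotientGroup.eq_one_iff _).mp ?_
    rw [QuotientGroup.mk_mul, QuotientGroup.mk_inv, hs_mk, inv_mul_cancel]
  let ρ : G → ↥(Subgroup.center G) := fun g => ⟨(s ↑g)⁻¹ * g, hmem g⟩
  have hgρ : ∀ g : G, s ↑g * ↑(ρ g) = g := fun g => mul_inv_cancel_left _ _
  have hρs : ∀ (u) (z : G) (hz : z ∈ Subgroup.center G), ρ (s u * z) = ⟨z, hz⟩ := by
    intro u z hz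
    refine Subtype.ext ?_
    show (s ↑(s u * z))⁻¹ * (s u * z) = z
    rw [hmks u z hz, inv_mul_cancel_left]
  let Φ : MulAut (G ⧸ Subgroup.center G) × MulAut ↥(Subgroup.center G) → G → G :=
    fun x g => s (x.1 ↑g) * ↑(x.2 (ρ g))
  have hΦs : ∀ x (u) (z : G) (hz : z ∈ Subgroup.center G),
      Φ x (s u * z) = s (x.1 u) * ↑(x.2 ⟨z, hz⟩) := by
    intro x u z hz
    show s (x.1 ↑(s u * z)) * ↑(x.2 (ρ (s u * z))) = _
    rw [hmks u z hz, hρs u z hz]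
  have hΦmk : ∀ x (g : G), (QuotientGroup.mk (Φ x g) : G ⧸ Subgroup.center G) = x.1 ↑g := by
    intro x g
    exact hmks _ _ (x.2 (ρ g)).2
  have hΦcomp : ∀ x y (g : G), Φ x (Φ y g) = Φ (x * y) g := by
    intro x y g
    show Φ x (s (y.1 ↑g) * ↑(y.2 (ρ g))) = _
    rw [hΦs x _ _ (y.2 (ρ g)).2]
    rfl
  have hΦone : ∀ g : G, Φ 1 g = g := fun g => hgρ g
  -- the pseudo-isometry condition
  let C : MulAut (G ⧸ Subgroup.center G) × MulAut ↥(Subgroup.center G) → Prop := fun x =>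
    ∀ g h g' h' : G,
      x.1 ↑g = (↑g' : G ⧸ Subgroup.center G) →
      x.1 ↑h = (↑h' : G ⧸ Subgroup.center G) →
      x.2 ⟨⁅g, h⁆, comm_mem_center hcz g h⟩ = ⟨⁅g', h'⁆, comm_mem_center hcz g' h'⟩
  have hCinv : ∀ x, C x → C x⁻¹ := by
    intro x hx g h g' h' hg hh
    have hg2 : x.1 ↑g' = (↑g : G ⧸ Subgroup.center G) := by
      rw [← hg]; exact x.1.apply_inv_self _ ↑g
    have hh2 : x.1 ↑h' = (↑h : G ⧸ Subgroup.center G) := by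
      rw [← hh]; exact x.1.apply_inv_self _ ↑h
    have hxx := hx g' h' g h hg2 hh2
    rw [← hxx]
    show x.2⁻¹ (x.2 _) = _
    rw [MulAut.inv_def]
    exact x.2.symm_apply_apply _
  have hΦmul : ∀ x, C x → ∀ g h : G, Φ x (g * h) = Φ x g * Φ x h := by
    intro x hx g h
    have hz1 := (ρ g).2
    have hz2 := (ρ h).2
    have hw : ⁅s ↑h, s ↑g⁆⁻¹ ^ k * ((ρ g : G) * (ρ h : G)) ∈ Subgroup.center G :=
      mul_mem (pow_mem (inv_mem (comm_mem_center hcz _ _)) k) (mul_mem hz1 hz2)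
    have hgh : g * h
        = s ((↑g : G ⧸ Subgroup.center G) * ↑h)
          * (⁅s ↑h, s ↑g⁆⁻¹ ^ k * ((ρ g : G) * (ρ h : G))) := by
      conv_lhs => rw [← hgρ g, ← hgρ h]
      rw [hs_add]
      exact (assemble hcz (s ↑g) (s ↑h) _ _ hz1 k).symm
    rw [hgh, hΦs x _ _ hw]
    have hsub : (⟨⁅s ↑h, s ↑g⁆⁻¹ ^ k * ((ρ g : G) * (ρ h : G)), hw⟩ : ↥(Subgroup.center G))
        = (⟨⁅s ↑h, s ↑g⁆, comm_mem_center hcz _ _⟩ : ↥(Subgroup.center G))⁻¹ ^ k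
          * (ρ g * ρ h) := rfl
    rw [hsub, map_mul x.2, map_pow x.2, map_inv x.2, map_mul x.2]
    have hxc := hx (s ↑h) (s ↑g) (s (x.1 ↑h)) (s (x.1 ↑g))
      (by rw [hs_mk, hs_mk]) (by rw [hs_mk, hs_mk])
    rw [hxc, map_mul x.1, hs_add]
    have hcoe : ((((⟨⁅s (x.1 ↑h), s (x.1 ↑g)⁆, comm_mem_center hcz _ _⟩ :
          ↥(Subgroup.center G)))⁻¹ ^ k * (x.2 (ρ g) * x.2 (ρ h)) : ↥(Subgroup.center G)) : G)
        = ⁅s (x.1 ↑h), s (x.1 ↑g)⁆⁻¹ ^ k * (↑(x.2 (ρ g)) * ↑(x.2 (ρ h))) := rfl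
    rw [hcoe]
    exact assemble hcz _ _ _ _ (x.2 (ρ g)).2 k
  -- Φ as an automorphism
  let ΦAut : ∀ x, C x → MulAut G := fun x hx =>
    { toFun := Φ x
      invFun := Φ x⁻¹
      left_inv := fun g => by rw [hΦcomp, inv_mul_cancel, hΦone]
      right_inv := fun g => by rw [hΦcomp, mul_inv_cancel, hΦone]
      map_mul' := hΦmul x hx }
  have hs1 : s 1 = 1 := by
    have h1 := hs_add 1 1
    rw [mul_one, commutatorElement_eq_one_iff_commute.mpr (Commute.refl _), one_pow,
      mul_one] at h1
    have h2 : s (1 : G ⧸ Subgroup.center G) * 1 = s 1 * s 1 := by rw [mul_one, ← h1]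
    exact (mul_left_cancel h2).symm
  have hπΦ : ∀ x (hx : C x), π (ΦAut x hx) = x := by
    intro x hx
    refine Prod.ext ?_ ?_
    · refine MulEquiv.ext fun q => ?_
      induction q using QuotientGroup.induction_on with | H g =>
      show (π (ΦAut x hx)).1 ↑g = x.1 ↑g
      rw [hπ1]
      exact hΦmk x g
    · refine MulEquiv.ext fun c => ?_
      refine Subtype.ext ?_
      show ((π (ΦAut x hx)).2 c : G) = ↑(x.2 c)
      rw [hπ2]
      show Φ x ↑c = ↑(x.2 c)
      have : (c : G) = s 1 * ↑c := by rw [hs1, one_mul]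
      rw [this, hΦs x 1 ↑c c.2, map_one, hs1, one_mul]
  -- range characterization
  have hrange : ∀ x, x ∈ π.range ↔ C x := by
    intro x
    constructor
    · rintro ⟨φ, rfl⟩ g h g' h' hg hh
      rw [hπ1] at hg hh
      have hzg : (φ g)⁻¹ * g' ∈ Subgroup.center G := (QuotientGroup.eq).mp hg
      have hzh : (φ h)⁻¹ * h' ∈ Subgroup.center G := (QuotientGroup.eq).mp hh
      refine Subtype.ext ?_
      rw [hπ2]
      show φ ⁅g, h⁆ = ⁅g', h'⁆
      rw [map_commutatorElement]
      have eg : g' = φ g * ((φ g)⁻¹ * g') := by rw [mul_inv_cancel_left]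
      have eh : h' = φ h * ((φ h)⁻¹ * h') := by rw [mul_inv_cancel_left]
      rw [eg, eh, comm_coset hcz _ _ hzg hzh]
    · intro hx
      exact ⟨ΦAut x hx, hπΦ x hx⟩
  refine ⟨π, hπ1, hπ2, fun x => hrange x, ?_, ?_, ?_⟩
  · -- kernel characterization
    intro φ
    rw [MonoidHom.mem_ker]
    constructor
    · intro hφ
      have h1 : (π φ).1 = 1 := by rw [hφ]; rfl
      have h2 : (π φ).2 = 1 := by rw [hφ]; rfl
      constructor
      · intro g
        rw [← hπ1 φ g, h1, MulAut.one_apply]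
      · intro c hc
        have hcZ : c ∈ Subgroup.center G := by rw [← hcz]; exact hc
        have h3 := hπ2 φ ⟨c, hcZ⟩
        rw [h2, MulAut.one_apply] at h3
        exact h3.symm
    · rintro ⟨hA, hB⟩
      refine Prod.ext ?_ ?_
      · refine MulEquiv.ext fun q => ?_
        induction q using QuotientGroup.induction_on with | H g =>
        show (π φ).1 ↑g = (1 : MulAut (G ⧸ Subgroup.center G)) ↑g
        rw [hπ1, MulAut.one_apply, hA g]
      · refine MulEquiv.ext fun c => ?_
        refine Subtype.ext ?_
        show ((π φ).2 c : G) = (((1 : MulAut ↥(Subgroup.center G)) c : ↥(Subgroup.center G)) : G)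
        rw [hπ2, MulAut.one_apply]
        exact hB ↑c (by rw [hcz]; exact c.2)
  · -- kernel isomorphic to Hom(G/Z, Z)
    have hA : ∀ φk : ↥π.ker, ∀ g : G,
        (((φk : MulAut G) g : G) : G ⧸ Subgroup.center G) = ↑g := by
      intro φk g
      have h1 : π ↑φk = 1 := φk.2
      rw [← hπ1 ↑φk g, h1]
      rfl
    have hBk : ∀ φk : ↥π.ker, ∀ z : G, z ∈ Subgroup.center G → (φk : MulAut G) z = z := by
      intro φk z hz
      have h1 : π ↑φk = 1 := φk.2
      have h2 := hπ2 ↑φk ⟨z, hz⟩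
      rw [h1] at h2
      exact h2.symm
    have hmemt : ∀ (φk : ↥π.ker) (g : G),
        g⁻¹ * (φk : MulAut G) g ∈ Subgroup.center G := by
      intro φk g
      refine (QuotientGroup.eq_one_iff _).mp ?_
      rw [QuotientGroup.mk_mul, QuotientGroup.mk_inv, hA φk g, inv_mul_cancel]
    let tMH : ↥π.ker → (G →* ↥(Subgroup.center G)) := fun φk =>
      MonoidHom.mk' (fun g => ⟨g⁻¹ * (φk : MulAut G) g, hmemt φk g⟩) (by
        intro g h
        refine Subtype.ext ?_
        show (g * h)⁻¹ * (φk : MulAut G) (g * h)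
            = (g⁻¹ * (φk : MulAut G) g) * (h⁻¹ * (φk : MulAut G) h)
        have hc := hmemt φk g
        rw [map_mul]
        calc (g * h)⁻¹ * ((φk : MulAut G) g * (φk : MulAut G) h)
            = h⁻¹ * (g⁻¹ * (φk : MulAut G) g) * (φk : MulAut G) h := by group
          _ = (g⁻¹ * (φk : MulAut G) g) * h⁻¹ * (φk : MulAut G) h := by
              rw [central_comm hc h⁻¹]
          _ = _ := by rw [mul_assoc])
    let eF : ↥π.ker → ((G ⧸ Subgroup.center G) →* ↥(Subgroup.center G)) := fun φk =>
      QuotientGroup.lift _ (tMH φk) (by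
        intro z hz
        rw [MonoidHom.mem_ker]
        refine Subtype.ext ?_
        show z⁻¹ * (φk : MulAut G) z = ((1 : ↥(Subgroup.center G)) : G)
        rw [hBk φk z hz, inv_mul_cancel]
        rfl)
    have heF : ∀ (φk : ↥π.ker) (g : G),
        ((eF φk ↑g : ↥(Subgroup.center G)) : G) = g⁻¹ * (φk : MulAut G) g := fun φk g => rfl
    have heFmul : ∀ a b : ↥π.ker, eF (a * b) = eF a * eF b := by
      intro a b
      refine MonoidHom.ext fun q => ?_
      induction q using QuotientGroup.induction_on with | H g =>
      refine Subtype.ext ?_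
      rw [MonoidHom.mul_apply]
      have hzb : g⁻¹ * (b : MulAut G) g ∈ Subgroup.center G := hmemt b g
      show g⁻¹ * ((a : MulAut G) * (b : MulAut G)) g
          = (g⁻¹ * (a : MulAut G) g) * (g⁻¹ * (b : MulAut G) g)
      rw [MulAut.mul_apply]
      calc g⁻¹ * (a : MulAut G) ((b : MulAut G) g)
          = g⁻¹ * (a : MulAut G) (g * (g⁻¹ * (b : MulAut G) g)) := by
            rw [mul_inv_cancel_left]
        _ = g⁻¹ * ((a : MulAut G) g * (g⁻¹ * (b : MulAut G) g)) := by
            rw [map_mul, hBk a _ hzb]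
        _ = _ := by rw [← mul_assoc]
    let e : ↥π.ker →* ((G ⧸ Subgroup.center G) →* ↥(Subgroup.center G)) :=
      MonoidHom.mk' eF heFmul
    have hinj : Function.Injective e := by
      intro a b hab
      refine Subtype.ext (MulEquiv.ext fun g => ?_)
      have h4 := congrArg (fun f => ((f ↑g : ↥(Subgroup.center G)) : G)) hab
      exact mul_left_cancel (h4 : g⁻¹ * (a : MulAut G) g = g⁻¹ * (b : MulAut G) g)
    have hsurjE : Function.Surjective e := by
      intro τ
      have hcoτ : ∀ g : G, ((g * ↑(τ ↑g) : G) : G ⧸ Subgroup.center G) = ↑g := by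
        intro g
        rw [QuotientGroup.mk_mul, (QuotientGroup.eq_one_iff _).mpr (τ ↑g).2, mul_one]
      let ψ : MulAut G :=
        { toFun := fun g => g * ↑(τ ↑g)
          invFun := fun g => g * (↑(τ ↑g))⁻¹
          left_inv := fun g => by
            show (g * ↑(τ ↑g)) * (↑(τ ↑(g * ↑(τ ↑g))) : G)⁻¹ = g
            rw [hcoτ g, mul_inv_cancel_right]
          right_inv := fun g => by
            show (g * (↑(τ ↑g) : G)⁻¹) * ↑(τ ↑(g * (↑(τ ↑g) : G)⁻¹)) = g
            have h5 : ((g * (↑(τ ↑g) : G)⁻¹ : G) : G ⧸ Subgroup.center G) = ↑g := by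
              rw [QuotientGroup.mk_mul, QuotientGroup.mk_inv,
                (QuotientGroup.eq_one_iff _).mpr (τ ↑g).2, inv_one, mul_one]
            rw [h5, inv_mul_cancel_right]
          map_mul' := fun g h => by
            show (g * h) * ↑(τ ↑(g * h)) = (g * ↑(τ ↑g)) * (h * ↑(τ ↑h))
            have hc := (τ (↑g : G ⧸ Subgroup.center G)).2
            rw [QuotientGroup.mk_mul, map_mul]
            show g * h * (↑(τ ↑g) * ↑(τ ↑h)) = (g * ↑(τ ↑g)) * (h * ↑(τ ↑h))
            rw [← mul_assoc (g * h), mul_assoc g h, central_comm hc h, ← mul_assoc g,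
              mul_assoc (g * ↑(τ ↑g))] }
      have hψker : ψ ∈ π.ker := by
        rw [MonoidHom.mem_ker]
        refine Prod.ext ?_ ?_
        · refine MulEquiv.ext fun q => ?_
          induction q using QuotientGroup.induction_on with | H g =>
          show (π ψ).1 ↑g = (1 : MulAut (G ⧸ Subgroup.center G)) ↑g
          rw [hπ1, MulAut.one_apply]
          exact hcoτ g
        · refine MulEquiv.ext fun c => ?_
          refine Subtype.ext ?_
          show ((π ψ).2 c : G) = (((1 : MulAut ↥(Subgroup.center G)) c : ↥(Subgroup.center G)) : G)
          rw [hπ2, MulAut.one_apply]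
          show (↑c : G) * ↑(τ ↑(↑c : G)) = ↑c
          rw [(QuotientGroup.eq_one_iff _).mpr c.2, map_one]
          show (↑c : G) * 1 = ↑c
          rw [mul_one]
      refine ⟨⟨ψ, hψker⟩, ?_⟩
      refine MonoidHom.ext fun q => ?_
      induction q using QuotientGroup.induction_on with | H g =>
      refine Subtype.ext ?_
      show g⁻¹ * (g * ↑(τ ↑g)) = ((τ ↑g : ↥(Subgroup.center G)) : G)
      rw [inv_mul_cancel_left]
    exact ⟨MulEquiv.ofBijective e ⟨hinj, hsurjE⟩⟩
  · -- splitting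
    have hsecC : ∀ y : ↥π.range, C ↑y := fun y => (hrange ↑y).mp y.2
    refine ⟨MonoidHom.mk' (fun y => ΦAut ↑y (hsecC y)) ?_, ?_⟩
    · intro a b
      refine MulEquiv.ext fun g => ?_
      show Φ ↑(a * b) g = (ΦAut ↑a (hsecC a) * ΦAut ↑b (hsecC b)) g
      rw [MulAut.mul_apply]
      show Φ ↑(a * b) g = Φ ↑a (Φ ↑b g)
      rw [hΦcomp]
      rfl
    · intro y
      exact hπΦ ↑y (hsecC y)
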